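/- Let 𝔫 be the 5-dimensional real Lie algebra l₅,₆ (case A) with orthonormal basis {E₁,…,E₅} and non-zero brackets [E₁,E₂] = m·E₃ + u·E₅, [E₁,E₃] = v·E₄ + w·E₅, [E₁,E₄] = x·E₅, [E₂,E₃] = y·E₅, where m, v, x, y are non-zero reals, u ∈ ℝ and w ≥ 0. Then there exist c ∈ ℝ and a derivation D of 𝔫 with Ric = c·Id + D if and only if u = 0, w = 0, m² = (3/2)x², v² = (3/2)x² and y² = x²; moreover, in that case necessarily c = −(11/4)x². -/

import Mathlib

open scoped BigOperators

namespace Nilsoliton8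

noncomputable section

abbrev V : Type := Fin 5 → ℝ

/-- The orthonormal basis vectors E₁,…,E₅ (indexed 0,…,4). -/
def E (i : Fin 5) : V := Pi.single i 1

/-- The inner product making `E` an orthonormal basis. -/
def ip (x y : V) : ℝ := ∑ i, x i * y i

/-- `D` is a derivation of the bracket `br`. -/
def IsDerivation (br : V → V → V) (D : V →ₗ[ℝ] V) : Prop :=
  ∀ X Y : V, D (br X Y) = br (D X) Y + br X (D Y)

/-- `Ric` is the Ricci operator of the nilpotent Lie group with left-invariant
metric determined by the bracket `br` and the orthonormal basis `E`. -/
def IsRicci (br : V → V → V) (Ric : V →ₗ[ℝ] V) : Prop :=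
  ∀ X Y : V, ip (Ric X) Y =
      -(1/2) * (∑ i : Fin 5, ip (br X (E i)) (br Y (E i)))
      + (1/4) * (∑ i : Fin 5, ∑ j : Fin 5, ip (br (E i) (E j)) X * ip (br (E i) (E j)) Y)

/-- The bracket of l₅,₆ (case A): [E₁,E₂] = m·E₃ + u·E₅,
[E₁,E₃] = v·E₄ + w·E₅, [E₁,E₄] = x·E₅, [E₂,E₃] = y·E₅. -/
def br (m u v w x y : ℝ) (X Y : V) : V :=
  (m * (X 0 * Y 1 - X 1 * Y 0)) • E 2 + (v * (X 0 * Y 2 - X 2 * Y 0)) • E 3 + (u * (X 0 * Y 1 - X 1 * Y 0) + w * (X 0 * Y 2 - X 2 * Y 0) + x * (X 0 * Y 3 - X 3 * Y 0) + y * (X 1 * Y 2 - X 2 * Y 1)) • E 4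

section
variable {m u v w x y : ℝ} {Ric : V →ₗ[ℝ] V}

lemma ric0 (hRic : IsRicci (br m u v w x y) Ric) (X : V) :
    Ric X 0 = -(1/2)*(m^2+u^2+v^2+w^2+x^2)*X 0 - (w*y/2)*X 1 + (u*y/2)*X 2 := by
  have h := hRic X (E 0)
  simp [ip, br, E, Fin.sum_univ_five, Pi.single_apply] at h; linarith

lemma ric1 (hRic : IsRicci (br m u v w x y) Ric) (X : V) :
    Ric X 1 = -(w*y/2)*X 0 - (1/2)*(m^2+u^2+y^2)*X 1 - (u*w/2)*X 2 - (u*x/2)*X 3 := by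
  have h := hRic X (E 1)
  simp [ip, br, E, Fin.sum_univ_five, Pi.single_apply] at h; linarith

lemma ric2 (hRic : IsRicci (br m u v w x y) Ric) (X : V) :
    Ric X 2 = (u*y/2)*X 0 - (u*w/2)*X 1 + (1/2)*(m^2-v^2-w^2-y^2)*X 2 - (w*x/2)*X 3 + (m*u/2)*X 4 := by
  have h := hRic X (E 2)
  simp [ip, br, E, Fin.sum_univ_five, Pi.single_apply] at h; linarith

lemma ric3 (hRic : IsRicci (br m u v w x y) Ric) (X : V) :
    Ric X 3 = -(u*x/2)*X 1 - (w*x/2)*X 2 + (1/2)*(v^2-x^2)*X 3 + (v*w/2)*X 4 := by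
  have h := hRic X (E 3)
  simp [ip, br, E, Fin.sum_univ_five, Pi.single_apply] at h; linarith

lemma ric4 (hRic : IsRicci (br m u v w x y) Ric) (X : V) :
    Ric X 4 = (m*u/2)*X 2 + (v*w/2)*X 3 + (1/2)*(u^2+w^2+x^2+y^2)*X 4 := by
  have h := hRic X (E 4)
  simp [ip, br, E, Fin.sum_univ_five, Pi.single_apply] at h; linarith

lemma fwd (hm : m ≠ 0) (hv : v ≠ 0) (hx : x ≠ 0) (hy : y ≠ 0)
    (hRic : IsRicci (br m u v w x y) Ric) (c : ℝ) (D : V →ₗ[ℝ] V)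
    (hD : IsDerivation (br m u v w x y) D)
    (hEq : Ric = c • (LinearMap.id : V →ₗ[ℝ] V) + D) :
    u = 0 ∧ w = 0 ∧ m ^ 2 = (3/2) * x ^ 2 ∧ v ^ 2 = (3/2) * x ^ 2 ∧ y ^ 2 = x ^ 2
      ∧ c = -(11/4) * x ^ 2 := by
  have hDa : ∀ (Z : V) (k : Fin 5), D Z k = Ric Z k - c * Z k := by
    intro Z k; rw [hEq]; simp
  -- u = 0
  have h1 := congrFun (hD (E 0) (E 4)) 3
  simp [hDa, br, E, Pi.single_apply, ric0 hRic, ric1 hRic, ric2 hRic, ric3 hRic, ric4 hRic] at h1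
  have hu : u = 0 := by tauto
  subst hu
  -- w = 0
  have h2 := congrFun (hD (E 0) (E 4)) 4
  simp [hDa, br, E, Pi.single_apply, ric0 hRic, ric1 hRic, ric2 hRic, ric3 hRic, ric4 hRic] at h2
  have hw0 : w = 0 := by tauto
  subst hw0
  -- the four diagonal equations
  have e1 := congrFun (hD (E 0) (E 1)) 2
  have e2 := congrFun (hD (E 0) (E 2)) 3
  have e3 := congrFun (hD (E 0) (E 3)) 4
  have e4 := congrFun (hD (E 1) (E 2)) 4
  simp [hDa, br, E, Pi.single_apply, ric0 hRic, ric1 hRic, ric2 hRic, ric3 hRic, ric4 hRic] at e1 e2 e3 e4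
  have E1 : 2*c + 3*m^2 + x^2 = 0 :=
    mul_left_cancel₀ hm (by linear_combination 2 * e1)
  have E2 : 2*c + 3*v^2 + y^2 = 0 :=
    mul_left_cancel₀ hv (by linear_combination 2 * e2)
  have E3 : 2*c + m^2 + 3*x^2 + y^2 = 0 :=
    mul_left_cancel₀ hx (by linear_combination 2 * e3)
  have E4 : 2*c + v^2 + x^2 + 3*y^2 = 0 :=
    mul_left_cancel₀ hy (by linear_combination 2 * e4)
  refine ⟨rfl, rfl, by linarith, by linarith, by linarith, by linarith⟩


def dg (d : Fin 5 → ℝ) : V →ₗ[ℝ] V where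
  toFun X i := d i * X i
  map_add' X Y := by funext i; simp [mul_add]
  map_smul' r X := by funext i; simp; ring

lemma bwd (hRic : IsRicci (br m 0 v 0 x y) Ric)
    (h1 : m ^ 2 = (3/2) * x ^ 2) (h2 : v ^ 2 = (3/2) * x ^ 2) (h3 : y ^ 2 = x ^ 2) :
    ∃ (c : ℝ) (D : V →ₗ[ℝ] V), IsDerivation (br m 0 v 0 x y) D ∧
      Ric = c • (LinearMap.id : V →ₗ[ℝ] V) + D := by
  refine ⟨-(11/4)*x^2, dg ![3/4*x^2, 3/2*x^2, 9/4*x^2, 3*x^2, 15/4*x^2], ?_, ?_⟩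
  · intro X Y
    funext k
    fin_cases k <;>
      simp [dg, br, E, Pi.single_apply] <;> ring
  · apply LinearMap.ext; intro X
    funext k
    fin_cases k
    · simp [dg, ric0 hRic X]; linear_combination (-(1/2) * X 0) * (h1 + h2)
    · simp [dg, ric1 hRic X]; linear_combination (-(1/2) * X 1) * (h1 + h3)
    · simp [dg, ric2 hRic X]; linear_combination ((1/2) * X 2) * (h1 - h2 - h3)
    · simp [dg, ric3 hRic X]; linear_combination ((1/2) * X 3) * h2
    · simp [dg, ric4 hRic X]; linear_combination ((1/2) * X 4) * h3

end

theorem stmt8 (m u v w x y : ℝ) (hm : m ≠ 0) (hv : v ≠ 0) (hx : x ≠ 0) (hy : y ≠ 0) (hw : 0 ≤ w)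
    (Ric : V →ₗ[ℝ] V) (hRic : IsRicci (br m u v w x y) Ric) :
    ((∃ (c : ℝ) (D : V →ₗ[ℝ] V), IsDerivation (br m u v w x y) D ∧
        Ric = c • (LinearMap.id : V →ₗ[ℝ] V) + D) ↔ (u = 0 ∧ w = 0 ∧ m ^ 2 = (3/2) * x ^ 2 ∧ v ^ 2 = (3/2) * x ^ 2 ∧ y ^ 2 = x ^ 2)) ∧
    (∀ (c : ℝ) (D : V →ₗ[ℝ] V), IsDerivation (br m u v w x y) D →
        Ric = c • (LinearMap.id : V →ₗ[ℝ] V) + D → c = -(11/4) * x ^ 2) := by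
  constructor
  · constructor
    · rintro ⟨c, D, hD, hEq⟩
      have h := fwd hm hv hx hy hRic c D hD hEq
      exact ⟨h.1, h.2.1, h.2.2.1, h.2.2.2.1, h.2.2.2.2.1⟩
    · rintro ⟨hu, hw0, h1, h2, h3⟩
      subst hu; subst hw0
      exact bwd hRic h1 h2 h3
  · intro c D hD hEq
    exact (fwd hm hv hx hy hRic c D hD hEq).2.2.2.2.2

end

end Nilsoliton8
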